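/- Let t ≥ 2 and let F be a connected t-uniform hypergraph with m ≥ 2 edges and no isolated vertices such that ρ(F) ≤ 1/(t−1). Then the edges of F can be ordered e₁, e₂, …, e_m so that for every j with 2 ≤ j ≤ m, |e_j ∩ (e₁ ∪ e₂ ∪ … ∪ e_{j−1})| = 1. -/

import Mathlib

open Finset

lemma stmt12_build {α : Type*} [DecidableEq α]
    (F : Finset (Finset α))
    (hconn : ∀ A ⊆ F, A.Nonempty → A ≠ F → ¬ Disjoint (A.sup id) ((F \ A).sup id)) :
    ∀ k, 1 ≤ k → k ≤ F.card → ∃ l : List (Finset α), l.Nodup ∧ l.length = k ∧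
      (∀ e ∈ l, e ∈ F) ∧ ∀ j (hj : j < l.length), 0 < j →
        ∃ i, ∃ hi : i < l.length, i < j ∧ (l[j] ∩ l[i]).Nonempty := by
  intro k
  induction k with
  | zero => omega
  | succ k ih =>
    intro _ hk1
    rcases Nat.eq_zero_or_pos k with hk0 | hkpos
    · subst hk0
      have hF : F.Nonempty := Finset.card_pos.mp (by omega)
      obtain ⟨e, he⟩ := hF
      exact ⟨[e], by simp, by simp, by simp [he], by simp⟩
    · obtain ⟨l, hnd, hlen, hmem, hprop⟩ := ih hkpos (by omega)
      set A := l.toFinset with hA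
      have hAsub : A ⊆ F := fun e he => hmem e (List.mem_toFinset.mp he)
      have hAcard : A.card = k := by rw [hA, List.toFinset_card_of_nodup hnd, hlen]
      have hAne : A ≠ F := by
        intro h; rw [h] at hAcard; omega
      have hAnonempty : A.Nonempty := by
        rw [← Finset.card_pos, hAcard]; omega
      have := hconn A hAsub hAnonempty hAne
      rw [Finset.not_disjoint_iff] at this
      obtain ⟨x, hxA, hxFA⟩ := this
      rw [Finset.mem_sup] at hxA hxFA
      obtain ⟨a, haA, hxa⟩ := hxA
      obtain ⟨e, heFA, hxe⟩ := hxFA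
      rw [Finset.mem_sdiff] at heFA
      refine ⟨l ++ [e], ?_, by simp [hlen], ?_, ?_⟩
      · rw [List.nodup_append]
        exact ⟨hnd, List.nodup_singleton e, by
          intro a ha b hb hab; rw [List.mem_singleton] at hb; subst hb hab
          exact heFA.2 (List.mem_toFinset.mpr ha)⟩
      · intro f hf
        rcases List.mem_append.mp hf with h | h
        · exact hmem f h
        · simp at h; subst h; exact heFA.1
      · intro j hj hj0
        simp only [List.length_append, List.length_singleton, hlen] at hj
        rcases Nat.lt_or_ge j l.length with hjl | hjl
        · obtain ⟨i, hi, hij, hne⟩ := hprop j hjl hj0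
          refine ⟨i, by simp; omega, hij, ?_⟩
          rwa [List.getElem_append_left hjl, List.getElem_append_left hi]
        · have hje : j = l.length := by omega
          obtain ⟨i, hi, hia⟩ := List.getElem_of_mem (List.mem_toFinset.mp haA)
          refine ⟨i, by simp; omega, by omega, ?_⟩
          have h1 : (l ++ [e])[j] = e := by
            subst hje; exact List.getElem_concat_length rfl _
          have h2 : (l ++ [e])[i]'(by simp; omega) = l[i] := List.getElem_append_left hi
          rw [h1, h2, hia]
          exact ⟨x, Finset.mem_inter.mpr ⟨hxe, hxa⟩⟩


/-- Let `t ≥ 2` and let `F` be a connected `t`-uniform hypergraph with `m ≥ 2` edges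
(represented by its edge set; its vertices are those covered by its edges, so it has no
isolated vertices) such that `ρ(F) ≤ 1/(t-1)`, i.e. every subhypergraph `F'` with at
least two edges satisfies `(e'-1)/(v'-t) ≤ 1/(t-1)`. Then the edges of `F` can be
ordered `e₁, …, e_m` so that for `2 ≤ j ≤ m`, `|e_j ∩ (e₁ ∪ ⋯ ∪ e_{j-1})| = 1`. -/
theorem stmt12 (t : ℕ) (ht : 2 ≤ t) (α : Type*) [Fintype α] [DecidableEq α]
    (F : Finset (Finset α)) (hunif : ∀ e ∈ F, e.card = t)
    (hm : 2 ≤ F.card)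
    (hconn : ∀ A ⊆ F, A.Nonempty → A ≠ F → ¬ Disjoint (A.sup id) ((F \ A).sup id))
    (hrho : ∀ F' ⊆ F, 2 ≤ F'.card →
      ((F'.card : ℝ) - 1) / (((F'.sup id).card : ℝ) - (t : ℝ)) ≤ 1 / ((t : ℝ) - 1)) :
    ∃ en : Fin F.card → Finset α,
      (∀ i, en i ∈ F) ∧ Function.Injective en ∧
      ∀ j : Fin F.card, 0 < (j : ℕ) →
        ((en j) ∩ ((Finset.univ.filter fun i => i < j).biUnion en)).card = 1 := by
  classical
  obtain ⟨l, hnd, hlen, hmem, hprop⟩ := stmt12_build F hconn F.card (by omega) le_rfl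
  set m := F.card with hmdef
  have hlen' : ∀ i : Fin m, (i : ℕ) < l.length := fun i => by rw [hlen]; exact i.2
  set en : Fin m → Finset α := fun i => l[(i : ℕ)]'(hlen' i) with hen
  have henF : ∀ i, en i ∈ F := fun i => hmem _ (List.getElem_mem _)
  have heninj : Function.Injective en := by
    intro i j hij
    have := List.Nodup.getElem_inj_iff hnd (hi := hlen' i) (hj := hlen' j)
    exact Fin.ext (this.mp hij)
  -- the partial unions
  set B : ℕ → Finset α := fun k => (univ.filter fun i : Fin m => (i : ℕ) < k).biUnion en
    with hB
  have hB0 : B 0 = ∅ := by simp [hB]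
  have hBsucc : ∀ k (hk : k < m), B (k + 1) = en ⟨k, hk⟩ ∪ B k := by
    intro k hk
    ext x
    simp only [hB, Finset.mem_biUnion, Finset.mem_filter, Finset.mem_univ, true_and,
      Finset.mem_union]
    constructor
    · rintro ⟨i, hik, hx⟩
      rcases Nat.lt_or_ge (i : ℕ) k with h | h
      · exact Or.inr ⟨i, h, hx⟩
      · have : i = ⟨k, hk⟩ := Fin.ext (show (i : ℕ) = k by omega)
        exact Or.inl (this ▸ hx)
    · rintro (hx | ⟨i, hik, hx⟩)
      · exact ⟨⟨k, hk⟩, Nat.lt_succ_self k, hx⟩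
      · exact ⟨i, Nat.lt_succ_of_lt hik, hx⟩
  set c : ℕ → ℕ := fun k => if hk : k < m then ((en ⟨k, hk⟩) ∩ B k).card else 0 with hc
  have hcard : ∀ k (hk : k < m), (B (k + 1)).card + c k = t + (B k).card := by
    intro k hk
    rw [hc]
    simp only [dif_pos hk]
    rw [hBsucc k hk, Finset.card_union_add_card_inter, hunif _ (henF ⟨k, hk⟩)]
  have htel : ∀ k, k ≤ m → (B k).card + ∑ j ∈ Finset.range k, c j = k * t := by
    intro k
    induction k with
    | zero => intro _; simp [hB0]
    | succ k ih =>
      intro hk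
      have h1 := ih (by omega)
      have h2 := hcard k (by omega)
      rw [Finset.sum_range_succ]
      have h3 : (k + 1) * t = k * t + t := by ring
      omega
  -- B m = F.sup id
  have himg : Finset.univ.image en = F := by
    apply Finset.eq_of_subset_of_card_le
    · intro e he
      obtain ⟨i, _, rfl⟩ := Finset.mem_image.mp he
      exact henF i
    · rw [Finset.card_image_of_injective _ heninj, Finset.card_univ, Fintype.card_fin]
  have hBm : B m = F.sup id := by
    ext x
    simp only [hB, Finset.mem_biUnion, Finset.mem_filter, Finset.mem_univ, true_and,
      Finset.mem_sup, id]
    constructor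
    · rintro ⟨i, _, hx⟩
      exact ⟨en i, henF i, hx⟩
    · rintro ⟨e, heF, hx⟩
      rw [← himg] at heF
      obtain ⟨i, _, rfl⟩ := Finset.mem_image.mp heF
      exact ⟨i, i.2, hx⟩
  set v := (F.sup id).card with hv
  -- v ≥ t + 1
  have hvt : t + 1 ≤ v := by
    obtain ⟨e1, e2, he1, he2, hne⟩ := (Finset.one_lt_card_iff (s := F)).mp (by omega)
    have hsub : e1 ∪ e2 ⊆ F.sup id := by
      apply Finset.union_subset
      · exact Finset.le_sup (f := id) he1
      · exact Finset.le_sup (f := id) he2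
    have h12 : t + 1 ≤ (e1 ∪ e2).card := by
      by_contra h
      have hle : (e1 ∪ e2).card ≤ e1.card := by rw [hunif _ he1]; omega
      have heq : e1 = e1 ∪ e2 := Finset.eq_of_subset_of_card_le Finset.subset_union_left hle
      have : e2 ⊆ e1 := heq ▸ Finset.subset_union_right
      exact hne (Finset.eq_of_subset_of_card_le this
        (by rw [hunif _ he1, hunif _ he2])).symm
    exact le_trans h12 (Finset.card_le_card hsub)
  -- key inequality from hrho
  have hkey : (m - 1) * (t - 1) + t ≤ v := by
    have hr := hrho F Finset.Subset.rfl hm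
    rw [← hv, ← hmdef] at hr
    have h1 : (0:ℝ) < (v : ℝ) - t := by
      have : (t:ℝ) + 1 ≤ v := by exact_mod_cast hvt
      linarith
    have h2 : (0:ℝ) < (t : ℝ) - 1 := by
      have : (2:ℝ) ≤ t := by exact_mod_cast ht
      linarith
    rw [div_le_div_iff₀ h1 h2] at hr
    have hr' : ((m:ℝ) - 1) * ((t:ℝ) - 1) ≤ (v:ℝ) - t := by linarith
    have hcast : (((m - 1) * (t - 1) + t : ℕ) : ℝ) ≤ (v : ℝ) := by
      push_cast [Nat.cast_sub (by omega : 1 ≤ m), Nat.cast_sub (by omega : 1 ≤ t)]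
      linarith
    exact_mod_cast hcast
  -- sum bound
  have hsum : (∑ j ∈ Finset.range m, c j) + v = m * t := by
    have := htel m le_rfl
    rw [hBm, ← hv] at this
    omega
  have hc0 : c 0 = 0 := by
    rw [hc]; simp only [dif_pos (by omega : 0 < m), hB0]
    simp
  have hsumIco : ∑ j ∈ Finset.Ico 1 m, c j ≤ m - 1 := by
    have hrg : ∑ j ∈ Finset.range m, c j = c 0 + ∑ j ∈ Finset.Ico 1 m, c j := by
      rw [Finset.range_eq_Ico, Finset.sum_eq_sum_Ico_succ_bot (by omega : 0 < m)]
    have hmt : m * t = (m - 1) * (t - 1) + t + (m - 1) := by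
      have h2 : 2 ≤ m := hm
      rcases Nat.exists_eq_add_of_le ht with ⟨t', ht'⟩
      rcases Nat.exists_eq_add_of_le h2 with ⟨m', hm'⟩
      have e1 : 2 + m' - 1 = m' + 1 := by omega
      have e2 : 2 + t' - 1 = t' + 1 := by omega
      rw [hm', ht', e1, e2]; ring
    omega
  have hclb : ∀ j ∈ Finset.Ico 1 m, 1 ≤ c j := by
    intro j hj
    rw [Finset.mem_Ico] at hj
    rw [hc]
    simp only [dif_pos hj.2]
    obtain ⟨i, hi, hij, hne⟩ := hprop j (by omega) (by omega)
    have hsubB : l[i] ⊆ B j := by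
      intro x hx
      simp only [hB, Finset.mem_biUnion, Finset.mem_filter, Finset.mem_univ, true_and]
      exact ⟨⟨i, by omega⟩, hij, hx⟩
    have : ((en ⟨j, hj.2⟩) ∩ B j).Nonempty := by
      obtain ⟨x, hx⟩ := hne
      rw [Finset.mem_inter] at hx
      exact ⟨x, Finset.mem_inter.mpr ⟨hx.1, hsubB hx.2⟩⟩
    exact Finset.card_pos.mpr this
  have hceq : ∀ j ∈ Finset.Ico 1 m, c j = 1 := by
    have hcardIco : (Finset.Ico 1 m).card = m - 1 := by rw [Nat.card_Ico]
    have hge : m - 1 ≤ ∑ j ∈ Finset.Ico 1 m, c j := by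
      calc m - 1 = ∑ _j ∈ Finset.Ico 1 m, 1 := by rw [Finset.sum_const, hcardIco, smul_eq_mul, mul_one]
      _ ≤ ∑ j ∈ Finset.Ico 1 m, c j := Finset.sum_le_sum hclb
    have heq : ∑ j ∈ Finset.Ico 1 m, (1:ℕ) = ∑ j ∈ Finset.Ico 1 m, c j := by
      rw [Finset.sum_const, hcardIco, smul_eq_mul, mul_one]
      omega
    intro j hj
    exact ((Finset.sum_eq_sum_iff_of_le (fun i hi => hclb i hi)).mp heq j hj).symm
  refine ⟨en, henF, heninj, ?_⟩
  intro j hj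
  have hjm : (j : ℕ) ∈ Finset.Ico 1 m := Finset.mem_Ico.mpr ⟨hj, j.2⟩
  have := hceq _ hjm
  rw [hc] at this
  simp only [dif_pos j.2] at this
  have hfe : (Finset.univ.filter fun i => i < j).biUnion en = B (j : ℕ) := rfl
  rw [hfe]
  rwa [Fin.eta] at this
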